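/- Let s ∈ (0,1) and R > 0. Let g ∈ L²(ℝ^d) with supp g ⊂ B_{R/2} and let φ ∈ L^∞(ℝ^d) with supp φ ⊂ B_{R/2}, where B_ρ is the open ball of radius ρ centered at 0. Then there is a constant C = C(d,s,R) such that ∫_{ℝ^d∖B_R} ( ∫_{B_R} |g(x)−g(y)| |φ(x)−φ(y)| / |x−y|^{d+s} dy )² dx ≤ C ‖φ‖_{L^∞(ℝ^d)}² ‖g‖_{L²(ℝ^d)}². -/

import Mathlib

open MeasureTheory Filter Topology Metric ENNReal

/-- Far-field/near-field cross estimate (term `III` of the commutator bound): for `g ∈ L²`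
and `φ ∈ L^∞` both supported in `B_{R/2}`,
`∫_{ℝ^d∖B_R} ( ∫_{B_R} |g(x)−g(y)||φ(x)−φ(y)| / |x−y|^{d+s} dy )² dx
  ≤ C(d,s,R) ‖φ‖_∞² ‖g‖_{L²}²`. -/
theorem cross_term_estimate_outer_inner
    (d : ℕ) (s R : ℝ) (hs : s ∈ Set.Ioo (0 : ℝ) 1) (hR : 0 < R) :
    ∃ C : ℝ≥0∞, C ≠ ⊤ ∧
      ∀ g φ : EuclideanSpace ℝ (Fin d) → ℝ,
        MemLp g 2 volume → tsupport g ⊆ ball (0 : EuclideanSpace ℝ (Fin d)) (R / 2) →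
        MemLp φ ⊤ volume → tsupport φ ⊆ ball (0 : EuclideanSpace ℝ (Fin d)) (R / 2) →
        ∫⁻ x in (ball (0 : EuclideanSpace ℝ (Fin d)) R)ᶜ,
            (∫⁻ y in ball (0 : EuclideanSpace ℝ (Fin d)) R,
              ENNReal.ofReal (|g x - g y| * |φ x - φ y| / dist x y ^ ((d : ℝ) + s))) ^ 2
          ≤ C * (eLpNorm φ ⊤ volume) ^ 2 * (eLpNorm g 2 volume) ^ 2 := by
  obtain ⟨hs0, hs1⟩ := hs
  set p : ℝ := (d : ℝ) + s with hp
  have hppos : 0 < p := by positivity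
  set A : ℝ := 2 * (1 + 1 / R) with hA
  have hApos : 0 < A := by positivity
  set K := ∫⁻ x : EuclideanSpace ℝ (Fin d), ENNReal.ofReal ((1 + ‖x‖) ^ (-(2 * p))) with hK
  have hKfin : K < ⊤ := by
    apply finite_integral_one_add_norm
    have : (Module.finrank ℝ (EuclideanSpace ℝ (Fin d)) : ℝ) = d := by
      simp [finrank_euclideanSpace]
    rw [this, hp]
    linarith [Nat.cast_nonneg (α := ℝ) d]
  set v := volume (ball (0 : EuclideanSpace ℝ (Fin d)) R) with hv
  have hvfin : v ≠ ⊤ := measure_ball_lt_top.ne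
  refine ⟨ENNReal.ofReal (A ^ (2 * p)) * v * K, ?_, ?_⟩
  · exact ENNReal.mul_ne_top (ENNReal.mul_ne_top ofReal_ne_top hvfin) hKfin.ne
  intro g φ hg hgs hφ hφs
  set M := eLpNorm φ ⊤ volume with hM
  have hMtop : M ≠ ⊤ := hφ.2.ne
  set m := M.toReal with hm
  have hm0 : 0 ≤ m := ENNReal.toReal_nonneg
  have hφae : ∀ᵐ y ∂(volume : Measure (EuclideanSpace ℝ (Fin d))), |φ y| ≤ m := by
    filter_upwards [ae_le_eLpNormEssSup (f := φ)
      (μ := (volume : Measure (EuclideanSpace ℝ (Fin d))))] with y hy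
    have hy' : (‖φ y‖₊ : ℝ≥0∞) ≤ M := by rw [hM, eLpNorm_exponent_top]; exact hy
    have := ENNReal.toReal_mono hMtop hy'
    simpa [Real.norm_eq_abs] using this
  set G := eLpNorm g 2 volume with hG
  have hGtop : G ≠ ⊤ := hg.2.ne
  set I := ∫⁻ y in ball (0 : EuclideanSpace ℝ (Fin d)) R, ENNReal.ofReal |g y| with hI
  -- Cauchy-Schwarz for the inner mass
  have hIle : I ≤ G * v ^ ((1 : ℝ) / 2) := by
    have h0 : I = eLpNorm g 1 (volume.restrict (ball (0 : EuclideanSpace ℝ (Fin d)) R)) := by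
      rw [eLpNorm_one_eq_lintegral_enorm]
      refine lintegral_congr fun y => ?_
      rw [← Real.norm_eq_abs, ofReal_norm]
    have h := eLpNorm_le_eLpNorm_mul_rpow_measure_univ (p := 1) (q := 2)
      (μ := volume.restrict (ball (0 : EuclideanSpace ℝ (Fin d)) R)) (by norm_num) hg.1.restrict
    have h2 : (1 / (1 : ℝ≥0∞).toReal - 1 / (2 : ℝ≥0∞).toReal) = (1 : ℝ) / 2 := by norm_num
    rw [h2, Measure.restrict_apply_univ] at h
    rw [h0]
    exact h.trans (mul_le_mul_left (eLpNorm_mono_measure _ Measure.restrict_le_self) _)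
  have hItop : I ≠ ⊤ :=
    (hIle.trans_lt (ENNReal.mul_lt_top hGtop.lt_top
      (ENNReal.rpow_lt_top_of_nonneg (by norm_num) hvfin))).ne
  -- pointwise bound on the inner integral, for x outside the ball
  have key : ∀ x ∉ ball (0 : EuclideanSpace ℝ (Fin d)) R,
      (∫⁻ y in ball (0 : EuclideanSpace ℝ (Fin d)) R,
          ENNReal.ofReal (|g x - g y| * |φ x - φ y| / dist x y ^ p))
        ≤ ENNReal.ofReal m * ENNReal.ofReal (A ^ p) *
            ENNReal.ofReal ((1 + ‖x‖) ^ (-p)) * I := by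
    intro x hx
    have hxR : R ≤ ‖x‖ := by
      have := hx
      simp only [mem_ball, dist_zero_right, not_lt] at this
      exact this
    have hxpos : 0 < ‖x‖ := lt_of_lt_of_le hR hxR
    have hgx : g x = 0 := by
      apply image_eq_zero_of_notMem_tsupport
      intro h
      exact hx (ball_subset_ball (by linarith) (hgs h))
    have hφx : φ x = 0 := by
      apply image_eq_zero_of_notMem_tsupport
      intro h
      exact hx (ball_subset_ball (by linarith) (hφs h))
    set c : ℝ := m * (A ^ p * (1 + ‖x‖) ^ (-p)) with hc
    have hc0 : 0 ≤ c := by positivity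
    calc (∫⁻ y in ball (0 : EuclideanSpace ℝ (Fin d)) R,
            ENNReal.ofReal (|g x - g y| * |φ x - φ y| / dist x y ^ p))
        ≤ ∫⁻ y in ball (0 : EuclideanSpace ℝ (Fin d)) R,
            ENNReal.ofReal c * ENNReal.ofReal |g y| := by
          refine lintegral_mono_ae ?_
          filter_upwards [ae_restrict_of_ae hφae] with y hy
          simp only [hgx, hφx, zero_sub, abs_neg]
          rw [← ENNReal.ofReal_mul hc0]
          apply ENNReal.ofReal_le_ofReal
          by_cases hgy : g y = 0
          · simp [hgy]
          by_cases hφy : φ y = 0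
          · simp [hφy, div_nonneg, mul_nonneg hc0 (abs_nonneg _)]
          have hyR : ‖y‖ < R / 2 := by
            have : y ∈ tsupport g := subset_closure hgy
            simpa [mem_ball, dist_zero_right] using hgs this
          have hdist : ‖x‖ / 2 ≤ dist x y := by
            rw [dist_eq_norm]
            have := norm_sub_norm_le x y
            linarith
          have hdpos : (0 : ℝ) < ‖x‖ / 2 := by positivity
          have hbase : 2 / ‖x‖ ≤ A / (1 + ‖x‖) := by
            rw [div_le_div_iff₀ hxpos (by positivity), hA]
            have h1 : 1 ≤ (1 / R) * ‖x‖ := by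
              rw [one_div]
              calc (1 : ℝ) = R⁻¹ * R := by field_simp
                _ ≤ R⁻¹ * ‖x‖ := by
                    exact mul_le_mul_of_nonneg_left hxR (by positivity)
            nlinarith
          have hrp : (1 : ℝ) / (‖x‖ / 2) ^ p ≤ A ^ p * (1 + ‖x‖) ^ (-p) := by
            have e1 : (1 : ℝ) / (‖x‖ / 2) ^ p = (2 / ‖x‖) ^ p := by
              rw [one_div, ← Real.inv_rpow hdpos.le, inv_div]
            have e2 : A ^ p * (1 + ‖x‖) ^ (-p) = (A / (1 + ‖x‖)) ^ p := by
              rw [Real.div_rpow hApos.le (by positivity), Real.rpow_neg (by positivity),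
                div_eq_mul_inv]
            rw [e1, e2]
            exact Real.rpow_le_rpow (by positivity) hbase hppos.le
          calc |g y| * |φ y| / dist x y ^ p
              ≤ |g y| * m / (‖x‖ / 2) ^ p := by
                apply div_le_div₀ (by positivity)
                · exact mul_le_mul_of_nonneg_left hy (abs_nonneg _)
                · positivity
                · exact Real.rpow_le_rpow hdpos.le hdist hppos.le
            _ = |g y| * m * ((1 : ℝ) / (‖x‖ / 2) ^ p) := by ring
            _ ≤ |g y| * m * (A ^ p * (1 + ‖x‖) ^ (-p)) := by
                exact mul_le_mul_of_nonneg_left hrp (by positivity)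
            _ = c * |g y| := by rw [hc]; ring
      _ = ENNReal.ofReal c * I := lintegral_const_mul' _ _ ENNReal.ofReal_ne_top
      _ = ENNReal.ofReal m * ENNReal.ofReal (A ^ p) *
            ENNReal.ofReal ((1 + ‖x‖) ^ (-p)) * I := by
          rw [hc, ENNReal.ofReal_mul hm0, ENNReal.ofReal_mul (by positivity)]
          ring
  -- main chain
  have homm : ENNReal.ofReal m = M := ENNReal.ofReal_toReal hMtop
  calc ∫⁻ x in (ball (0 : EuclideanSpace ℝ (Fin d)) R)ᶜ,
        (∫⁻ y in ball (0 : EuclideanSpace ℝ (Fin d)) R,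
          ENNReal.ofReal (|g x - g y| * |φ x - φ y| / dist x y ^ ((d : ℝ) + s))) ^ 2
      ≤ ∫⁻ x in (ball (0 : EuclideanSpace ℝ (Fin d)) R)ᶜ,
          (ENNReal.ofReal m * ENNReal.ofReal (A ^ p) *
            ENNReal.ofReal ((1 + ‖x‖) ^ (-p)) * I) ^ 2 := by
        refine setLIntegral_mono' measurableSet_ball.compl fun x hx => ?_
        exact pow_le_pow_left' (key x hx) 2
    _ = (ENNReal.ofReal m * ENNReal.ofReal (A ^ p) * I) ^ 2 *
          ∫⁻ x in (ball (0 : EuclideanSpace ℝ (Fin d)) R)ᶜ,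
            ENNReal.ofReal ((1 + ‖x‖) ^ (-(2 * p))) := by
        rw [← lintegral_const_mul']
        · refine lintegral_congr fun x => ?_
          have e : ENNReal.ofReal ((1 + ‖x‖) ^ (-(2 * p)))
              = ENNReal.ofReal ((1 + ‖x‖) ^ (-p)) ^ 2 := by
            rw [← ENNReal.ofReal_pow (by positivity)]
            congr 1
            rw [← Real.rpow_natCast ((1 + ‖x‖) ^ (-p)) 2, ← Real.rpow_mul (by positivity)]
            norm_num
            ring_nf
          rw [e]; ring
        · exact pow_ne_top (ENNReal.mul_ne_top
            (ENNReal.mul_ne_top ENNReal.ofReal_ne_top ENNReal.ofReal_ne_top) hItop)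
    _ ≤ (ENNReal.ofReal m * ENNReal.ofReal (A ^ p) * I) ^ 2 * K := by
        gcongr
        exact setLIntegral_le_lintegral _ _
    _ ≤ (M * ENNReal.ofReal (A ^ p) * (G * v ^ ((1 : ℝ) / 2))) ^ 2 * K := by
        gcongr
        rw [homm]
    _ = ENNReal.ofReal (A ^ (2 * p)) * v * K * M ^ 2 * G ^ 2 := by
        have e1 : (ENNReal.ofReal (A ^ p)) ^ 2 = ENNReal.ofReal (A ^ (2 * p)) := by
          rw [← ENNReal.ofReal_pow (by positivity)]
          congr 1
          rw [← Real.rpow_natCast (A ^ p) 2, ← Real.rpow_mul hApos.le]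
          norm_num
          ring_nf
        have e2 : (v ^ ((1 : ℝ) / 2)) ^ 2 = v := by
          rw [← ENNReal.rpow_natCast (v ^ ((1 : ℝ) / 2)) 2, ← ENNReal.rpow_mul]
          norm_num
        rw [mul_pow, mul_pow, mul_pow, e1, e2]
        ring
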